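/- Let U be a unitary on H_A ⊗ H_B mapping orthonormal vectors |ψ_j⟩, 1 ≤ j ≤ d_A, to |v_j⟩ ⊗ |0⟩_B with {|v_j⟩} orthonormal in H_A, and mapping |ψ_j⟩ for d_A < j ≤ k to vectors |w_j⟩ satisfying ⟨0|_B Tr_A(|w_j⟩⟨w_j|) |0⟩_B = 0. If moreover Tr_{B̄}(Σ_{j>d_A} p_j |w_j⟩⟨w_j|) = (Σ_{j>d_A} p_j / Σ_{j≤d_A} p_j) · Σ_{j≤d_A} p_j |v_j⟩⟨v_j|, then F(ρ_AB, U†(ρ_A^{out} ⊗ |0⟩⟨0|_B)U) = Σ_{j=1}^{d_A} p_j, where ρ_AB = Σ_{j=1}^k p_j|ψ_j⟩⟨ψ_j| with decreasing p_j and ρ_A^{out} = Tr_B(U ρ_AB U†). -/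

import Mathlib

open Matrix Kronecker Finset ComplexOrder

noncomputable section
namespace QAE

/-- Partial trace over the second tensor factor. -/
def ptraceB {A B : Type*} [Fintype B] (ρ : Matrix (A × B) (A × B) ℂ) : Matrix A A ℂ :=
  Matrix.of fun i j => ∑ k : B, ρ (i, k) (j, k)

/-- Partial trace over the first tensor factor. -/
def ptraceA {A B : Type*} [Fintype A] (ρ : Matrix (A × B) (A × B) ℂ) : Matrix B B ℂ :=
  Matrix.of fun i j => ∑ k : A, ρ (k, i) (k, j)

/-- Outer product |v⟩⟨v|. -/
def outer {A : Type*} (v : A → ℂ) : Matrix A A ℂ := Matrix.vecMulVec v (star v)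

/-- The positive semidefinite square root (the former `Matrix.PosSemidef.sqrt`). -/
def psdSqrt {n : Type*} [Fintype n] [DecidableEq n] {A : Matrix n n ℂ} (hA : A.PosSemidef) :
    Matrix n n ℂ :=
  hA.1.eigenvectorUnitary.1 * diagonal ((↑) ∘ (√·) ∘ hA.1.eigenvalues) *
  (star hA.1.eigenvectorUnitary : Matrix n n ℂ)

lemma posSemidef_psdSqrt {n : Type*} [Fintype n] [DecidableEq n] {A : Matrix n n ℂ}
    (hA : A.PosSemidef) : (psdSqrt hA).PosSemidef := by
  have hd : (diagonal ((↑) ∘ (√·) ∘ hA.1.eigenvalues : n → ℂ)).PosSemidef := by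
    refine Matrix.PosSemidef.diagonal ?_
    intro i
    simp only [Pi.zero_apply, Function.comp_apply]
    exact_mod_cast Real.sqrt_nonneg _
  have h := hd.mul_mul_conjTranspose_same (hA.1.eigenvectorUnitary.1)
  unfold psdSqrt
  rw [Matrix.star_eq_conjTranspose]
  exact h

lemma sandwich_psd {n : Type*} [Fintype n] [DecidableEq n] {ρ σ : Matrix n n ℂ}
    (hρ : ρ.PosSemidef) (hσ : σ.PosSemidef) :
    (psdSqrt hσ * ρ * psdSqrt hσ).PosSemidef := by
  have h := hρ.mul_mul_conjTranspose_same (psdSqrt hσ)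
  rwa [(posSemidef_psdSqrt hσ).isHermitian.eq] at h

-- Squared Uhlmann fidelity F(ρ,σ) = (Tr √(σ^{1/2} ρ σ^{1/2}))².
open Classical in
def sqFidelity {n : Type*} [Fintype n] [DecidableEq n] (ρ σ : Matrix n n ℂ) : ℝ :=
  if h : ρ.PosSemidef ∧ σ.PosSemidef then
    ((psdSqrt (sandwich_psd h.1 h.2)).trace).re ^ 2
  else 0

/-- A density matrix: positive semidefinite with unit trace. -/
def IsDensity {n : Type*} [Fintype n] [DecidableEq n] (ρ : Matrix n n ℂ) : Prop :=
  ρ.PosSemidef ∧ ρ.trace = 1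

end QAE
end


noncomputable section
namespace QAE

lemma outer_mul_outer {n : Type*} [Fintype n] (x y : n → ℂ) :
    outer x * outer y = (star x ⬝ᵥ y) • Matrix.vecMulVec x (star y) := by
  ext i j
  simp only [outer, Matrix.mul_apply, vecMulVec_apply, Pi.star_apply, Matrix.smul_apply,
    smul_eq_mul, dotProduct, Finset.sum_mul]
  exact Finset.sum_congr rfl fun k _ => by ring

section gen
variable {ι n : Type*} [Fintype n] [DecidableEq ι] (e : ι → n → ℂ)
  (horth : ∀ i j, star (e i) ⬝ᵥ e j = if i = j then 1 else 0)
include horth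

lemma outer_mul_outer_orth (i j : ι) :
    outer (e i) * outer (e j) = if i = j then outer (e i) else 0 := by
  rw [outer_mul_outer, horth]
  by_cases h : i = j
  · subst h; simp [outer]
  · simp [h]

lemma sum_outer_mul_sum_outer (s t : Finset ι) (a b : ι → ℂ) :
    (∑ i ∈ s, a i • outer (e i)) * (∑ j ∈ t, b j • outer (e j))
      = ∑ i ∈ s ∩ t, (a i * b i) • outer (e i) := by
  rw [Finset.sum_mul_sum]
  simp_rw [smul_mul_assoc, mul_smul_comm, outer_mul_outer_orth e horth, smul_ite, smul_zero,
    smul_smul]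
  rw [← Finset.sum_ite_mem]
  congr 1
  ext i
  rw [Finset.sum_ite_eq t i (fun j => (a i * b j) • outer (e i))]

omit horth in
lemma trace_outer (v : n → ℂ) : (outer v).trace = star v ⬝ᵥ v := by
  simp [outer, Matrix.trace, Matrix.diag, vecMulVec_apply, dotProduct, mul_comm]
end gen

lemma outer_psd {n : Type*} [Fintype n] (v : n → ℂ) : (outer v).PosSemidef := by
  have : outer v = replicateCol Unit v * (replicateCol Unit v)ᴴ := by
    rw [outer, vecMulVec_eq Unit, conjTranspose_replicateCol]
  rw [this]
  exact posSemidef_self_mul_conjTranspose _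

lemma smul_psd {n : Type*} [Fintype n] {M : Matrix n n ℂ} (hM : M.PosSemidef) {c : ℝ}
    (hc : 0 ≤ c) : ((c : ℂ) • M).PosSemidef := by
  constructor
  · rw [IsHermitian, conjTranspose_smul, hM.1.eq]
    congr 1
    simp
  · exact (hM.smul (show (0 : ℂ) ≤ (c : ℂ) by exact_mod_cast hc)).2

lemma sum_outer_psd {ι n : Type*} [Fintype n] (s : Finset ι) (c : ι → ℝ)
    (hc : ∀ i, 0 ≤ c i) (e : ι → n → ℂ) :
    (∑ i ∈ s, (c i : ℂ) • outer (e i)).PosSemidef := by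
  classical
  induction s using Finset.induction with
  | empty => simpa using Matrix.PosSemidef.zero
  | insert _ _ h ih => rw [Finset.sum_insert h]; exact (smul_psd (outer_psd _) (hc _)).add ih

open scoped MatrixOrder in
lemma psdSqrt_eq_of_sq_eq {n : Type*} [Fintype n] [DecidableEq n] {A B : Matrix n n ℂ}
    (hB : B.PosSemidef) (hA : A.PosSemidef) (h : B ^ 2 = A) : B = psdSqrt hA := by
  have e : psdSqrt hA = CFC.sqrt A := by
    rw [CFC.sqrt_eq_real_sqrt A hA.nonneg, cfcₙ_eq_cfc, hA.1.cfc_eq]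
    rfl
  rw [e, CFC.sqrt_unique (by rw [← h, sq]) hB.nonneg]

lemma sqrt_sum_outer {ι n : Type*} [Fintype n] [DecidableEq n] [DecidableEq ι]
    (e : ι → n → ℂ) (horth : ∀ i j, star (e i) ⬝ᵥ e j = if i = j then 1 else 0)
    (s : Finset ι) (c : ι → ℝ) (hc : ∀ i, 0 ≤ c i)
    (h : (∑ i ∈ s, (c i : ℂ) • outer (e i)).PosSemidef) :
    psdSqrt h = ∑ i ∈ s, ((Real.sqrt (c i) : ℂ)) • outer (e i) := by
  symm
  apply psdSqrt_eq_of_sq_eq (sum_outer_psd s (fun i => Real.sqrt (c i))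
    (fun i => Real.sqrt_nonneg _) e)
  rw [pow_two, sum_outer_mul_sum_outer e horth, Finset.inter_self]
  refine Finset.sum_congr rfl fun i _ => ?_
  rw [← Complex.ofReal_mul, Real.mul_self_sqrt (hc i)]

lemma conj_outer {n m : Type*} [Fintype n] [Fintype m] (M : Matrix m n ℂ) (x : n → ℂ) :
    M * outer x * Mᴴ = outer (M *ᵥ x) := by
  ext i j
  simp only [outer, Matrix.mul_apply, vecMulVec_apply, Pi.star_apply, conjTranspose_apply,
    mulVec, dotProduct, Finset.sum_mul, Finset.mul_sum, map_sum, RCLike.star_def, _root_.map_mul]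
  refine Finset.sum_congr rfl fun k _ => Finset.sum_congr rfl fun l _ => by ring

lemma ptraceB_sum {A B ι : Type*} [Fintype B] (s : Finset ι) (f : ι → Matrix (A × B) (A × B) ℂ) :
    ptraceB (∑ i ∈ s, f i) = ∑ i ∈ s, ptraceB (f i) := by
  ext i j
  simp only [ptraceB, of_apply, Matrix.sum_apply]
  rw [Finset.sum_comm]

lemma ptraceB_smul {A B : Type*} [Fintype B] (c : ℂ) (M : Matrix (A × B) (A × B) ℂ) :
    ptraceB (c • M) = c • ptraceB M := by
  ext i j
  simp [ptraceB, Finset.mul_sum]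

lemma ptraceB_outer_tensor {A B : Type*} [Fintype B] (v : A → ℂ) (b : B → ℂ) :
    ptraceB (outer (fun ab : A × B => v ab.1 * b ab.2)) = (star b ⬝ᵥ b) • outer v := by
  ext i j
  simp only [ptraceB, outer, of_apply, vecMulVec_apply, Pi.star_apply, Matrix.smul_apply,
    smul_eq_mul, dotProduct, Finset.sum_mul, RCLike.star_def, _root_.map_mul]
  refine Finset.sum_congr rfl fun k _ => by ring

lemma outer_kron {A B : Type*} (v : A → ℂ) (b : B → ℂ) :
    outer v ⊗ₖ outer b = outer (fun ab : A × B => v ab.1 * b ab.2) := by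
  ext ⟨i, k⟩ ⟨j, l⟩
  simp only [kroneckerMap_apply, outer, vecMulVec_apply, Pi.star_apply, RCLike.star_def, _root_.map_mul]
  ring

lemma sqrt_congr {n : Type*} [Fintype n] [DecidableEq n] {M N : Matrix n n ℂ}
    (hM : M.PosSemidef) (hN : N.PosSemidef) (h : M = N) : psdSqrt hM = psdSqrt hN := by
  subst h; rfl

lemma sqFidelity_commuting {ι n : Type*} [Fintype n] [DecidableEq n] [Fintype ι] [DecidableEq ι]
    (e : ι → n → ℂ) (horth : ∀ i j, star (e i) ⬝ᵥ e j = if i = j then 1 else 0)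
    (s : Finset ι) (a b : ι → ℝ) (ha : ∀ i, 0 ≤ a i) (hb : ∀ i, 0 ≤ b i) :
    sqFidelity (∑ i, (a i : ℂ) • outer (e i)) (∑ i ∈ s, (b i : ℂ) • outer (e i))
      = (∑ i ∈ s, Real.sqrt (a i * b i)) ^ 2 := by
  have hρ := sum_outer_psd Finset.univ a ha e
  have hσ := sum_outer_psd s b hb e
  unfold sqFidelity
  rw [dif_pos ⟨hρ, hσ⟩]
  have hsand : psdSqrt (⟨hρ, hσ⟩ : _ ∧ _).2 * (∑ i, (a i : ℂ) • outer (e i)) *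
      psdSqrt (⟨hρ, hσ⟩ : _ ∧ _).2 = ∑ i ∈ s, ((a i * b i : ℝ) : ℂ) • outer (e i) := by
    rw [sqrt_sum_outer e horth s b hb,
      sum_outer_mul_sum_outer e horth, sum_outer_mul_sum_outer e horth,
      Finset.inter_univ, Finset.inter_self]
    refine Finset.sum_congr rfl fun i _ => ?_
    congr 1
    rw [mul_comm ((Real.sqrt (b i) : ℂ)) ((a i : ℂ)), mul_assoc, ← Complex.ofReal_mul,
      Real.mul_self_sqrt (hb i), Complex.ofReal_mul]
  have hs2 := sqrt_congr (sandwich_psd hρ hσ)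
    (sum_outer_psd s (fun i => a i * b i) (fun i => mul_nonneg (ha i) (hb i)) e) hsand
  rw [hs2, sqrt_sum_outer e horth s _ (fun i => mul_nonneg (ha i) (hb i))]
  rw [Matrix.trace_sum]
  have htr : ∀ i ∈ s, ((Real.sqrt (a i * b i) : ℂ) • outer (e i)).trace
      = ((Real.sqrt (a i * b i) : ℝ) : ℂ) := by
    intro i _
    rw [Matrix.trace_smul, trace_outer, horth i i, if_pos rfl, smul_eq_mul, mul_one]
  rw [Finset.sum_congr rfl htr, ← Complex.ofReal_sum, Complex.ofReal_re]

end QAE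
end

noncomputable section
namespace QAE
lemma ptraceB_add {A B : Type*} [Fintype B] (M N : Matrix (A × B) (A × B) ℂ) :
    ptraceB (M + N) = ptraceB M + ptraceB N := by
  ext i j
  simp [ptraceB, Finset.sum_add_distrib]

lemma add_smul_self {M : Type*} [AddCommMonoid M] [Module ℂ M] (c : ℂ) (T : M) :
    T + c • T = (1 + c) • T := by rw [add_smul, one_smul]

lemma sum_kron {A B ι : Type*} (s : Finset ι) (f : ι → Matrix A A ℂ) (K : Matrix B B ℂ) :
    (∑ i ∈ s, f i) ⊗ₖ K = ∑ i ∈ s, (f i ⊗ₖ K) := by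
  ext ⟨i, a⟩ ⟨j, b⟩
  simp [Matrix.sum_apply, Finset.sum_mul]
end QAE
end

/-- achievability of the fidelity bound Σ_{j≤d_A} p_j. -/
theorem stmt7 {A B : Type*} [Fintype A] [Fintype B] [DecidableEq A] [DecidableEq B]
    {k : ℕ} (hk : Fintype.card A < k)
    (p : Fin k → ℝ) (hpa : Antitone p) (hp0 : ∀ j, 0 ≤ p j) (hp1 : ∑ j, p j = 1)
    (hpd : 0 < ∑ j ∈ Finset.univ.filter (fun j : Fin k => (j : ℕ) < Fintype.card A), p j)
    (ψ : Fin k → (A × B) → ℂ)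
    (hψ : ∀ i j, star (ψ i) ⬝ᵥ ψ j = if i = j then 1 else 0)
    (v : Fin k → A → ℂ)
    (hv : ∀ i j : Fin k, (i : ℕ) < Fintype.card A → (j : ℕ) < Fintype.card A →
      star (v i) ⬝ᵥ v j = if i = j then 1 else 0)
    (b0 : B → ℂ) (hb0 : star b0 ⬝ᵥ b0 = 1)
    (U : Matrix (A × B) (A × B) ℂ) (hU : Uᴴ * U = 1 ∧ U * Uᴴ = 1)
    (hmap : ∀ j : Fin k, (j : ℕ) < Fintype.card A →
      U *ᵥ ψ j = fun ab => v j ab.1 * b0 ab.2)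
    (w : Fin k → (A × B) → ℂ)
    (hw : ∀ j : Fin k, Fintype.card A ≤ (j : ℕ) → w j = U *ᵥ ψ j)
    (hw0 : ∀ j : Fin k, Fintype.card A ≤ (j : ℕ) →
      star b0 ⬝ᵥ ((QAE.ptraceA (QAE.outer (w j))) *ᵥ b0) = 0)
    (hmarg :
      QAE.ptraceB (∑ j ∈ Finset.univ.filter (fun j : Fin k => Fintype.card A ≤ (j : ℕ)),
          (p j : ℂ) • QAE.outer (w j))
        = (((∑ j ∈ Finset.univ.filter (fun j : Fin k => Fintype.card A ≤ (j : ℕ)), p j) /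
            (∑ j ∈ Finset.univ.filter (fun j : Fin k => (j : ℕ) < Fintype.card A), p j) : ℝ) : ℂ)
          • ∑ j ∈ Finset.univ.filter (fun j : Fin k => (j : ℕ) < Fintype.card A),
              (p j : ℂ) • QAE.outer (v j))
    (ρAB : Matrix (A × B) (A × B) ℂ) (hρ : ρAB = ∑ j, (p j : ℂ) • QAE.outer (ψ j)) :
    QAE.sqFidelity ρAB (Uᴴ * ((QAE.ptraceB (U * ρAB * Uᴴ)) ⊗ₖ QAE.outer b0) * U)
      = ∑ j ∈ Finset.univ.filter (fun j : Fin k => (j : ℕ) < Fintype.card A), p j := by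
  have hfilter : Finset.univ.filter (fun j : Fin k => ¬ (j : ℕ) < Fintype.card A)
      = Finset.univ.filter (fun j : Fin k => Fintype.card A ≤ (j : ℕ)) := by
    simp [not_lt]
  -- abbreviations only through notation
  have hPsum : (∑ j ∈ Finset.univ.filter (fun j : Fin k => (j : ℕ) < Fintype.card A), p j)
      + (∑ j ∈ Finset.univ.filter (fun j : Fin k => Fintype.card A ≤ (j : ℕ)), p j) = 1 := by
    rw [← hfilter, Finset.sum_filter_add_sum_filter_not, hp1]
  have hρsplit : ρAB
      = (∑ j ∈ Finset.univ.filter (fun j : Fin k => (j : ℕ) < Fintype.card A),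
          (p j : ℂ) • QAE.outer (ψ j))
        + ∑ j ∈ Finset.univ.filter (fun j : Fin k => Fintype.card A ≤ (j : ℕ)),
            (p j : ℂ) • QAE.outer (ψ j) := by
    rw [hρ, ← hfilter, Finset.sum_filter_add_sum_filter_not]
  have hconjU : ∀ x : (A × B) → ℂ, U * QAE.outer x * Uᴴ = QAE.outer (U *ᵥ x) :=
    fun x => QAE.conj_outer U x
  have hconjUH : ∀ x : (A × B) → ℂ, Uᴴ * QAE.outer x * U = QAE.outer (Uᴴ *ᵥ x) := fun x => by
    have := QAE.conj_outer Uᴴ x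
    rwa [conjTranspose_conjTranspose] at this
  have hUρ : U * ρAB * Uᴴ
      = (∑ j ∈ Finset.univ.filter (fun j : Fin k => (j : ℕ) < Fintype.card A),
          (p j : ℂ) • QAE.outer (fun ab : A × B => v j ab.1 * b0 ab.2))
        + ∑ j ∈ Finset.univ.filter (fun j : Fin k => Fintype.card A ≤ (j : ℕ)),
            (p j : ℂ) • QAE.outer (w j) := by
    rw [hρsplit, mul_add, add_mul, Matrix.mul_sum, Matrix.mul_sum, Matrix.sum_mul,
      Matrix.sum_mul]
    congr 1
    · refine Finset.sum_congr rfl fun j hj => ?_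
      rw [mul_smul_comm, smul_mul_assoc, hconjU,
        hmap j (Finset.mem_filter.mp hj).2]
    · refine Finset.sum_congr rfl fun j hj => ?_
      rw [mul_smul_comm, smul_mul_assoc, hconjU, ← hw j (Finset.mem_filter.mp hj).2]
  have hρout : QAE.ptraceB (U * ρAB * Uᴴ)
      = (((1 : ℝ) / (∑ j ∈ Finset.univ.filter (fun j : Fin k => (j : ℕ) < Fintype.card A), p j)
          : ℝ) : ℂ)
        • ∑ j ∈ Finset.univ.filter (fun j : Fin k => (j : ℕ) < Fintype.card A),
            (p j : ℂ) • QAE.outer (v j) := by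
    rw [hUρ, QAE.ptraceB_add, QAE.ptraceB_sum, hmarg]
    have h1 : ∀ j ∈ Finset.univ.filter (fun j : Fin k => (j : ℕ) < Fintype.card A),
        QAE.ptraceB ((p j : ℂ) • QAE.outer (fun ab : A × B => v j ab.1 * b0 ab.2))
          = (p j : ℂ) • QAE.outer (v j) := by
      intro j _
      rw [QAE.ptraceB_smul, QAE.ptraceB_outer_tensor, hb0, one_smul]
    rw [Finset.sum_congr rfl h1, QAE.add_smul_self]
    congr 1
    have hre : (1 : ℝ)
        + (∑ j ∈ Finset.univ.filter (fun j : Fin k => Fintype.card A ≤ (j : ℕ)), p j)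
          / (∑ j ∈ Finset.univ.filter (fun j : Fin k => (j : ℕ) < Fintype.card A), p j)
        = 1 / (∑ j ∈ Finset.univ.filter (fun j : Fin k => (j : ℕ) < Fintype.card A), p j) := by
      field_simp
      linarith [hPsum]
    rw [← hre]
    push_cast
    ring
  have hσeq : Uᴴ * ((QAE.ptraceB (U * ρAB * Uᴴ)) ⊗ₖ QAE.outer b0) * U
      = ∑ j ∈ Finset.univ.filter (fun j : Fin k => (j : ℕ) < Fintype.card A),
          ((p j / (∑ i ∈ Finset.univ.filter (fun i : Fin k => (i : ℕ) < Fintype.card A), p i)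
            : ℝ) : ℂ) • QAE.outer (ψ j) := by
    rw [hρout, Matrix.smul_kronecker, QAE.sum_kron, mul_smul_comm, smul_mul_assoc,
      Matrix.mul_sum, Matrix.sum_mul, Finset.smul_sum]
    refine Finset.sum_congr rfl fun j hj => ?_
    have hjlt := (Finset.mem_filter.mp hj).2
    rw [Matrix.smul_kronecker, QAE.outer_kron, ← hmap j hjlt, mul_smul_comm, smul_mul_assoc,
      hconjUH, Matrix.mulVec_mulVec, hU.1, Matrix.one_mulVec, smul_smul]
    congr 1
    push_cast
    ring
  rw [hσeq, hρ, QAE.sqFidelity_commuting ψ hψ _ p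
    (fun j => p j / (∑ i ∈ Finset.univ.filter (fun i : Fin k => (i : ℕ) < Fintype.card A), p i))
    hp0 (fun j => div_nonneg (hp0 j) hpd.le)]
  have hsq : ∀ j ∈ Finset.univ.filter (fun j : Fin k => (j : ℕ) < Fintype.card A),
      Real.sqrt (p j * (p j /
        (∑ i ∈ Finset.univ.filter (fun i : Fin k => (i : ℕ) < Fintype.card A), p i)))
      = p j / Real.sqrt
          (∑ i ∈ Finset.univ.filter (fun i : Fin k => (i : ℕ) < Fintype.card A), p i) := by
    intro j _
    rw [← mul_div_assoc, Real.sqrt_div (mul_self_nonneg (p j)), Real.sqrt_mul_self (hp0 j)]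
  rw [Finset.sum_congr rfl hsq, ← Finset.sum_div, div_pow, Real.sq_sqrt hpd.le, sq,
    mul_div_assoc, div_self hpd.ne', mul_one]
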